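/- Let D ⊆ ℂ × ℂ be a nonempty open set, let D₁ := Prod.fst '' D and D₂ := Prod.snd '' D, and for an index type S let (g_s : D₁ → ℂ) and (h_s : D₂ → ℂ) be families of holomorphic functions; define F_s : D → ℂ × ℂ by F_s(w₁, w₂) = (g_s(w₁), h_s(w₂)). If {g_s} is normal in the general sense on D₁ and {h_s} is normal in the general sense on D₂, then {F_s} is normal in the general sense on D. -/

import Mathlib

/-- A family `F : ι → α → E` of functions into a normed space is normal in the general sense on
a set `U` if every sequence in the family has a subsequence which either converges uniformly on
every compact subset of `U` to a limit function, or diverges uniformly to `∞` on every compact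
subset of `U`. -/
def NormalGenOn {α E ι : Type*} [TopologicalSpace α] [NormedAddCommGroup E]
    (F : ι → α → E) (U : Set α) : Prop :=
  ∀ u : ℕ → ι, ∃ φ : ℕ → ℕ, StrictMono φ ∧
    ((∃ f : α → E, ∀ K : Set α, K ⊆ U → IsCompact K →
        TendstoUniformlyOn (fun n => F (u (φ n))) f Filter.atTop K) ∨
     (∀ K : Set α, K ⊆ U → IsCompact K → ∀ M : ℝ, 0 < M →
        ∀ᶠ n in Filter.atTop, ∀ z ∈ K, M ≤ ‖F (u (φ n)) z‖))

/-- If both component families of a family of split-form bicomplex holomorphic functions are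
normal in the general sense on the coordinate projections `D₁ = Prod.fst '' D`,
`D₂ = Prod.snd '' D`, then the bicomplex family is normal in the general sense on `D`. -/
theorem stmt14 {S : Type*} (D : Set (ℂ × ℂ)) (hD : IsOpen D) (hne : D.Nonempty)
    (g h : S → ℂ → ℂ)
    (hg : ∀ s, DifferentiableOn ℂ (g s) (Prod.fst '' D))
    (hh : ∀ s, DifferentiableOn ℂ (h s) (Prod.snd '' D))
    (hng : NormalGenOn g (Prod.fst '' D)) (hnh : NormalGenOn h (Prod.snd '' D)) :
    NormalGenOn (fun s => fun w : ℂ × ℂ => (g s w.1, h s w.2)) D := by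
  intro u
  obtain ⟨φ₁, hφ₁, hg1⟩ := hng u
  obtain ⟨φ₂, hφ₂, hh1⟩ := hnh (u ∘ φ₁)
  refine ⟨φ₁ ∘ φ₂, hφ₁.comp hφ₂, ?_⟩
  have hφ₂t : Filter.Tendsto φ₂ Filter.atTop Filter.atTop := hφ₂.tendsto_atTop
  rcases hh1 with ⟨fh, hfh⟩ | hhd
  · rcases hg1 with ⟨fg, hfg⟩ | hgd
    · left
      refine ⟨fun w => (fg w.1, fh w.2), fun K hK hKc => ?_⟩
      rw [Metric.tendstoUniformlyOn_iff]
      intro ε hε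
      have h1 := (Metric.tendstoUniformlyOn_iff.mp
        (hfg (Prod.fst '' K) (Set.image_mono hK) (hKc.image continuous_fst))) ε hε
      have h2 := (Metric.tendstoUniformlyOn_iff.mp
        (hfh (Prod.snd '' K) (Set.image_mono hK) (hKc.image continuous_snd))) ε hε
      filter_upwards [hφ₂t.eventually h1, h2] with n h1n h2n z hz
      have e1 := h1n z.1 ⟨z, hz, rfl⟩
      have e2 := h2n z.2 ⟨z, hz, rfl⟩
      simp only [Prod.dist_eq, Function.comp_apply] at *
      exact max_lt e1 e2
    · right
      intro K hK hKc M hM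
      have := hgd (Prod.fst '' K) (Set.image_mono hK) (hKc.image continuous_fst) M hM
      filter_upwards [hφ₂t.eventually this] with n hn z hz
      exact le_trans (hn z.1 ⟨z, hz, rfl⟩) (norm_fst_le ((g (u ((φ₁ ∘ φ₂) n)) z.1, h (u ((φ₁ ∘ φ₂) n)) z.2)))
  · right
    intro K hK hKc M hM
    have := hhd (Prod.snd '' K) (Set.image_mono hK) (hKc.image continuous_snd) M hM
    filter_upwards [this] with n hn z hz
    exact le_trans (hn z.2 ⟨z, hz, rfl⟩) (norm_snd_le ((g (u ((φ₁ ∘ φ₂) n)) z.1, h (u ((φ₁ ∘ φ₂) n)) z.2)))
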